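/- A node s has at least one affected target if and only if it is an affected source of v: {s ∈ V : T(s) ≠ ∅} = S(v) = {s ∈ V : d(s,u) < ∞ and d(s,u) + ω'(u,v) ≤ d(s,v)}. -/

import Mathlib

set_option linter.unusedSectionVars false


open scoped BigOperators

/-- A directed graph on vertex set `V` with positive real edge weights. -/
structure WDigraph (V : Type*) where
  /-- the edge relation -/
  E : V → V → Prop
  /-- the edge weights -/
  w : V → V → ℝ
  /-- weights of edges are positive -/
  pos : ∀ a b, E a b → 0 < w a b

namespace WDigraph

variable {V : Type*} [Fintype V] [DecidableEq V]

/-- `p` is a simple path from `s` to `t` in `G`: a nonempty list of pairwise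
distinct vertices starting at `s`, ending at `t`, consecutive vertices joined
by edges. (Since all weights are positive, every shortest path is simple, so
it suffices to consider simple paths throughout.) -/
def IsPath (G : WDigraph V) (s t : V) (p : List V) : Prop :=
  List.Chain' G.E p ∧ p.head? = some s ∧ p.getLast? = some t ∧ p.Nodup

/-- The total weight of a list of vertices (sum of the weights of consecutive pairs). -/
def pw (G : WDigraph V) : List V → ℝ
  | [] => 0
  | [_] => 0
  | a :: b :: r => G.w a b + G.pw (b :: r)

/-- `d(s,t)`: shortest-path distance from `s` to `t`, equal to `⊤` (infinity)
if `t` is unreachable from `s`. -/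
noncomputable def dist (G : WDigraph V) (s t : V) : EReal :=
  sInf ((fun p => (G.pw p : EReal)) '' {p | G.IsPath s t p})

/-- The set of shortest `s`-`t` paths in `G`. -/
def SP (G : WDigraph V) (s t : V) : Set (List V) :=
  {p | G.IsPath s t p ∧ (G.pw p : EReal) = G.dist s t}

/-- `σ_{st}`: the number of shortest `s`-`t` paths in `G`. -/
noncomputable def sigma (G : WDigraph V) (s t : V) : ℕ :=
  (G.SP s t).ncard

/-- `σ_{st}(v)`: the number of shortest `s`-`t` paths in `G` that contain `v`. -/
noncomputable def sigmaV (G : WDigraph V) (s t v : V) : ℕ :=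
  {p ∈ G.SP s t | v ∈ p}.ncard

/-- `σ_{st}(v,w)`: the number of shortest `s`-`t` paths in `G` using the edge `(v,w)`. -/
noncomputable def sigmaE (G : WDigraph V) (s t v w : V) : ℕ :=
  {p ∈ G.SP s t | [v, w] <:+: p}.ncard

/-- `P_s(t)`: the set of predecessors of `t` with respect to source `s`:
nodes `y` with `(y,t) ∈ E` and `d(s,y) + ω(y,t) = d(s,t) < ∞`. -/
def pred (G : WDigraph V) (s t : V) : Set V :=
  {y | G.E y t ∧ G.dist s y + (G.w y t : EReal) = G.dist s t ∧ G.dist s t < ⊤}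

/-- `δ_{s•}(v)`: Brandes's one-sided dependency of `s` on `v`
(a summand is `0` whenever its denominator is `0`, which is automatic since
in Lean division by zero yields zero). -/
noncomputable def delta (G : WDigraph V) (s v : V) : ℝ :=
  ∑ᶠ t ∈ {t : V | t ≠ s ∧ t ≠ v}, (G.sigmaV s t v : ℝ) / (G.sigma s t : ℝ)

/-- `c_B(v)`: the betweenness centrality of `v`. -/
noncomputable def bc (G : WDigraph V) (v : V) : ℝ :=
  ∑ᶠ s ∈ {s : V | s ≠ v}, G.delta s v

/-- `G'` is obtained from `G` by the incremental update `(u, v, ω'(u,v))`: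
either a new edge `(u,v) ∉ E` is inserted with positive weight, or the weight
of the existing edge `(u,v)` is decreased; all other edges and weights are
unchanged. (Positivity of all weights is part of the `WDigraph` structure.) -/
structure IsUpdate (G G' : WDigraph V) (u v : V) : Prop where
  /-- the updated edge is present in `G'` -/
  edge' : G'.E u v
  /-- `E' = E ∪ {(u,v)}` -/
  edge_iff : ∀ a b, G'.E a b ↔ G.E a b ∨ a = u ∧ b = v
  /-- `ω'` agrees with `ω` on all edges other than `(u,v)` -/
  weight_eq : ∀ a b, ¬(a = u ∧ b = v) → G'.w a b = G.w a b
  /-- either an insertion of a new edge, or a weight decrease of an existing one -/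
  insert_or_decrease : ¬ G.E u v ∨ (G.E u v ∧ G'.w u v < G.w u v)

/-- `S(t)`: the affected sources of `t`. -/
def affS (G G' : WDigraph V) (t : V) : Set V :=
  {s | G.dist s t > G'.dist s t ∨ G.sigma s t ≠ G'.sigma s t}

/-- `T(s)`: the affected targets of `s`. -/
def affT (G G' : WDigraph V) (s : V) : Set V :=
  {t | G.dist s t > G'.dist s t ∨ G.sigma s t ≠ G'.sigma s t}

/-- `Δ_{s•}(v) = Σ_{t ∈ T(s), t ≠ v} σ_{st}(v)/σ_{st}`, computed in `G`
(`0`-convention for zero denominators). -/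
noncomputable def Delta (G G' : WDigraph V) (s v : V) : ℝ :=
  ∑ᶠ t ∈ {t : V | t ∈ affT G G' s ∧ t ≠ v}, (G.sigmaV s t v : ℝ) / (G.sigma s t : ℝ)

/-- `Δ'_{s•}(v) = Σ_{t ∈ T(s), t ≠ v} σ'_{st}(v)/σ'_{st}`, computed in `G'`
(`0`-convention for zero denominators). -/
noncomputable def Delta' (G G' : WDigraph V) (s v : V) : ℝ :=
  ∑ᶠ t ∈ {t : V | t ∈ affT G G' s ∧ t ≠ v}, (G'.sigmaV s t v : ℝ) / (G'.sigma s t : ℝ)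

variable {G : WDigraph V}

lemma pw_cons_cons (a b : V) (l : List V) : G.pw (a :: b :: l) = G.w a b + G.pw (b :: l) := rfl

lemma pw_append_cons : ∀ (l₁ : List V) (x : V) (l₂ : List V),
    G.pw (l₁ ++ x :: l₂) = G.pw (l₁ ++ [x]) + G.pw (x :: l₂)
  | [], x, l₂ => by simp [pw]
  | [a], x, l₂ => by simp only [List.cons_append, List.nil_append, pw_cons_cons]; simp [pw]
  | a :: b :: r, x, l₂ => by
    have h : G.pw (b :: r ++ x :: l₂) = G.pw (b :: r ++ [x]) + G.pw (x :: l₂) :=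
      pw_append_cons (b :: r) x l₂
    simp only [List.cons_append] at *
    rw [pw_cons_cons, pw_cons_cons, h]; ring

lemma pw_nonneg : ∀ {p : List V}, List.Chain' G.E p → 0 ≤ G.pw p
  | [], _ => le_refl _
  | [_], _ => le_refl _
  | a :: b :: r, h => by
    simp only [List.Chain', List.isChain_cons_cons] at h
    have := pw_nonneg h.2
    have := G.pos a b h.1
    rw [pw_cons_cons]; linarith

lemma finite_isPath (s t : V) : {p | G.IsPath s t p}.Finite := by
  apply Set.Finite.subset (List.finite_length_le V (Fintype.card V))
  intro p hp
  exact hp.2.2.2.length_le_card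

lemma dist_le {s t : V} {p : List V} (hp : G.IsPath s t p) :
    G.dist s t ≤ (G.pw p : EReal) :=
  sInf_le ⟨p, hp, rfl⟩

lemma dist_nonneg (s t : V) : (0 : EReal) ≤ G.dist s t := by
  apply le_sInf
  rintro x ⟨p, hp, rfl⟩
  simp only []
  exact_mod_cast pw_nonneg hp.1

lemma exists_SP (s t : V) (h : G.dist s t < ⊤) : ∃ p, p ∈ G.SP s t := by
  have hne : ((fun p => (G.pw p : EReal)) '' {p | G.IsPath s t p}).Nonempty := by
    by_contra hemp
    rw [Set.not_nonempty_iff_eq_empty] at hemp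
    rw [dist, hemp, sInf_empty] at h
    exact absurd h (lt_irrefl _)
  have hfin : ((fun p => (G.pw p : EReal)) '' {p | G.IsPath s t p}).Finite :=
    (finite_isPath s t).image _
  have := hne.csInf_mem hfin
  rw [show sInf ((fun p => (G.pw p : EReal)) '' {p | G.IsPath s t p}) = G.dist s t from rfl] at this
  obtain ⟨p, hp, hpw⟩ := this
  exact ⟨p, hp, hpw⟩

lemma dist_lt_top {s t : V} {p : List V} (hp : G.IsPath s t p) : G.dist s t < ⊤ :=
  lt_of_le_of_lt (dist_le hp) (by exact_mod_cast lt_top_iff_ne_top.mpr (EReal.coe_ne_top _))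

lemma dist_eq_top (s t : V) (h : ∀ p, ¬ G.IsPath s t p) : G.dist s t = ⊤ := by
  have : {p | G.IsPath s t p} = ∅ := Set.eq_empty_iff_forall_notMem.mpr h
  rw [dist, this, Set.image_empty, sInf_empty]


lemma exists_dup_decomp : ∀ {p : List V}, ¬ p.Nodup →
    ∃ (l₁ : List V) (x : V) (l₂ l₃ : List V), p = l₁ ++ x :: l₂ ++ x :: l₃ := by
  intro p
  induction p with
  | nil => intro h; exact absurd List.nodup_nil h
  | cons a rest ih =>
    intro h
    rw [List.nodup_cons] at h
    push_neg at h
    by_cases ha : a ∈ rest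
    · obtain ⟨l₂, l₃, hr⟩ := List.append_of_mem ha
      exact ⟨[], a, l₂, l₃, by simp [hr]⟩
    · obtain ⟨l₁, x, l₂, l₃, hr⟩ := ih (h ha)
      exact ⟨a :: l₁, x, l₂, l₃, by simp [hr]⟩

lemma head?_eq_of_append {l₁ l₂ : List V} {x : V} :
    (l₁ ++ x :: l₂).head? = (l₁ ++ [x]).head? := by
  cases l₁ <;> rfl

lemma getLast?_append_cons {l₁ l₂ : List V} {x : V} :
    (l₁ ++ x :: l₂).getLast? = (x :: l₂).getLast? := by
  rw [List.getLast?_append]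
  have hs : ((x :: l₂).getLast?).isSome := by
    rw [List.getLast?_isSome]; simp
  obtain ⟨y, hy⟩ := Option.isSome_iff_exists.mp hs
  rw [hy]; rfl

/-- Walk lemma: any walk from s to t bounds the distance. -/
lemma dist_le_pw_walk : ∀ (n : ℕ) {p : List V}, p.length ≤ n →
    List.Chain' G.E p → p.head? = some s → p.getLast? = some t →
    G.dist s t ≤ (G.pw p : EReal) := by
  intro n
  induction n with
  | zero =>
    intro p hl _ hh _
    rw [Nat.le_zero, List.length_eq_zero_iff] at hl
    subst hl; simp at hh
  | succ n ih =>
    intro p hl hc hh ht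
    by_cases hnd : p.Nodup
    · exact dist_le ⟨hc, hh, ht, hnd⟩
    · obtain ⟨l₁, x, l₂, l₃, rfl⟩ := exists_dup_decomp hnd
      set q := l₁ ++ x :: l₃ with hq
      have horig : l₁ ++ x :: l₂ ++ x :: l₃ = (l₁ ++ x :: l₂) ++ x :: l₃ := by simp
      have hcq : List.Chain' G.E q := by
        rw [hq]; simp only [List.Chain', List.isChain_append]
        rw [horig] at hc; simp only [List.Chain', List.isChain_append] at hc
        obtain ⟨h1, h2, h3⟩ := hc
        refine ⟨h1.1, h2, fun y hy z hz => ?_⟩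
        have hzx : x = z := by simpa using hz
        subst hzx
        exact h1.2.2 y hy x (by simp)
      have hhq : q.head? = some s := by
        rw [hq, head?_eq_of_append, ← head?_eq_of_append (l₂ := l₂ ++ x :: l₃)]
        rw [show l₁ ++ x :: (l₂ ++ x :: l₃) = l₁ ++ x :: l₂ ++ x :: l₃ by simp]
        exact hh
      have htq : q.getLast? = some t := by
        rw [hq, getLast?_append_cons]
        rw [horig, getLast?_append_cons] at ht
        exact ht
      have hlq : q.length ≤ n := by
        rw [hq]
        simp only [List.length_append, List.length_cons] at hl ⊢
        omega
      have hmid : 0 ≤ G.pw (x :: l₂ ++ [x]) := by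
        apply pw_nonneg
        apply hc.infix
        exact ⟨l₁, l₃, by simp⟩
      have hwt : G.pw q ≤ G.pw (l₁ ++ x :: l₂ ++ x :: l₃) := by
        have a1 : G.pw (l₁ ++ x :: (l₂ ++ x :: l₃)) =
            G.pw (l₁ ++ [x]) + G.pw (x :: (l₂ ++ x :: l₃)) := pw_append_cons l₁ x _
        have a2 : G.pw ((x :: l₂) ++ x :: l₃) =
            G.pw ((x :: l₂) ++ [x]) + G.pw (x :: l₃) := pw_append_cons (x :: l₂) x l₃
        have e1 : G.pw (l₁ ++ x :: l₂ ++ x :: l₃) =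
            G.pw (l₁ ++ [x]) + G.pw (x :: l₂ ++ [x]) + G.pw (x :: l₃) := by
          rw [show l₁ ++ x :: l₂ ++ x :: l₃ = l₁ ++ x :: (l₂ ++ x :: l₃) by simp, a1,
            show x :: (l₂ ++ x :: l₃) = (x :: l₂) ++ x :: l₃ by simp, a2]
          simp only [List.cons_append]
          ring
        have e2 : G.pw q = G.pw (l₁ ++ [x]) + G.pw (x :: l₃) := by
          rw [hq]; exact pw_append_cons l₁ x l₃
        rw [e1, e2]; linarith
      calc G.dist s t ≤ (G.pw q : EReal) := ih hlq hcq hhq htq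
        _ ≤ _ := by exact_mod_cast hwt

lemma not_infix_of_getLast {p : List V} {u v : V} (hnd : p.Nodup) (hl : p.getLast? = some u) :
    ¬ [u, v] <:+: p := by
  rintro ⟨a, b, rfl⟩
  have he : a ++ [u, v] ++ b = a ++ u :: v :: b := by simp
  rw [he] at hnd hl
  rw [getLast?_append_cons, List.getLast?_cons_cons] at hl
  have hmem : u ∈ v :: b := by
    rw [List.getLast?_eq_some_iff] at hl
    obtain ⟨ys, hys⟩ := hl
    rw [hys]; simp
  have hsub : (u :: v :: b).Nodup :=
    List.Nodup.sublist (List.sublist_append_right a (u :: v :: b)) hnd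
  rw [List.nodup_cons] at hsub
  exact hsub.1 hmem


variable {G' : WDigraph V} {u v : V}

lemma not_infix_tail {a u v : V} {r : List V} (hni : ¬ [u, v] <:+: (a :: r)) :
    ¬ [u, v] <:+: r := fun hr => hni (hr.trans (List.suffix_cons a r).isInfix)

lemma IsUpdate.pw_eq (h : IsUpdate G G' u v) :
    ∀ {p : List V}, ¬ [u, v] <:+: p → G'.pw p = G.pw p
  | [], _ => rfl
  | [_], _ => rfl
  | a :: b :: r, hni => by
    have h1 : ¬ (a = u ∧ b = v) := by
      rintro ⟨rfl, rfl⟩; exact hni ⟨[], r, rfl⟩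
    rw [pw_cons_cons, pw_cons_cons, h.weight_eq a b h1, h.pw_eq (not_infix_tail hni)]

lemma IsUpdate.chain_down (h : IsUpdate G G' u v) :
    ∀ {p : List V}, List.Chain' G'.E p → ¬ [u, v] <:+: p → List.Chain' G.E p
  | [], _, _ => List.isChain_nil
  | [_], _, _ => List.isChain_singleton _
  | a :: b :: r, hc, hni => by
    simp only [List.Chain', List.isChain_cons_cons] at hc ⊢
    refine ⟨?_, h.chain_down hc.2 (not_infix_tail hni)⟩
    rcases (h.edge_iff a b).mp hc.1 with hab | ⟨rfl, rfl⟩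
    · exact hab
    · exact absurd ⟨[], r, rfl⟩ hni

lemma IsUpdate.chain_up (h : IsUpdate G G' u v) {p : List V}
    (hc : List.Chain' G.E p) : List.Chain' G'.E p :=
  hc.imp fun a b hab => (h.edge_iff a b).mpr (Or.inl hab)

lemma IsUpdate.pw'_le_pw (h : IsUpdate G G' u v) :
    ∀ {p : List V}, List.Chain' G.E p → G'.pw p ≤ G.pw p
  | [], _ => le_refl _
  | [_], _ => le_refl _
  | a :: b :: r, hc => by
    simp only [List.Chain', List.isChain_cons_cons] at hc
    have ih := h.pw'_le_pw hc.2
    rw [pw_cons_cons, pw_cons_cons]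
    by_cases hab : a = u ∧ b = v
    · obtain ⟨rfl, rfl⟩ := hab
      rcases h.insert_or_decrease with hne | ⟨_, hlt⟩
      · exact absurd hc.1 hne
      · linarith
    · rw [h.weight_eq a b hab]; linarith

lemma IsUpdate.isPath_up (h : IsUpdate G G' u v) {s t : V} {p : List V}
    (hp : G.IsPath s t p) : G'.IsPath s t p :=
  ⟨h.chain_up hp.1, hp.2.1, hp.2.2.1, hp.2.2.2⟩

lemma IsUpdate.dist'_le_dist (h : IsUpdate G G' u v) (s t : V) :
    G'.dist s t ≤ G.dist s t := by
  apply le_sInf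
  rintro x ⟨p, hp, rfl⟩
  calc G'.dist s t ≤ (G'.pw p : EReal) := dist_le (h.isPath_up hp)
    _ ≤ (G.pw p : EReal) := by exact_mod_cast h.pw'_le_pw hp.1

/-- Any `G'`-path ending at `u` is a `G`-path with the same weight. -/
lemma IsUpdate.isPath_to_u (h : IsUpdate G G' u v) {s : V} {p : List V} :
    G'.IsPath s u p ↔ G.IsPath s u p := by
  constructor
  · rintro ⟨hc, hh, ht, hnd⟩
    exact ⟨h.chain_down hc (not_infix_of_getLast hnd ht), hh, ht, hnd⟩
  · exact h.isPath_up

lemma IsUpdate.dist_to_u (h : IsUpdate G G' u v) (s : V) :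
    G'.dist s u = G.dist s u := by
  unfold dist
  congr 1
  ext x
  constructor
  · rintro ⟨p, hp, rfl⟩
    have hp' := h.isPath_to_u.mp hp
    exact ⟨p, hp', by simp only []; rw [h.pw_eq (not_infix_of_getLast hp'.2.2.2 hp'.2.2.1)]⟩
  · rintro ⟨p, hp, rfl⟩
    exact ⟨p, h.isPath_to_u.mpr hp, by simp only []; rw [h.pw_eq (not_infix_of_getLast hp.2.2.2 hp.2.2.1)]⟩

lemma infix_decomp {p : List V} (hinf : [u, v] <:+: p) :
    ∃ a b, p = a ++ u :: v :: b := by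
  obtain ⟨a, b, hab⟩ := hinf
  exact ⟨a, b, by rw [← hab]; simp⟩

lemma isPath_prefix {H : WDigraph V} {s t x : V} {a b : List V}
    (hp : H.IsPath s t (a ++ x :: b)) : H.IsPath s x (a ++ [x]) := by
  refine ⟨hp.1.prefix ⟨b, by simp⟩, ?_, ?_, ?_⟩
  · rw [← head?_eq_of_append]; exact hp.2.1
  · exact getLast?_append_cons (l₂ := ([] : List V))
  · refine List.Nodup.sublist ?_ hp.2.2.2
    exact (List.append_sublist_append_left a).mpr
      (List.cons_sublist_cons.mpr (List.nil_sublist b))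

lemma isPath_suffix {H : WDigraph V} {s t x : V} {a b : List V}
    (hp : H.IsPath s t (a ++ x :: b)) : H.IsPath x t (x :: b) := by
  refine ⟨hp.1.suffix ⟨a, rfl⟩, rfl, ?_, ?_⟩
  · rw [← getLast?_append_cons]; exact hp.2.2.1
  · exact List.Nodup.sublist (List.sublist_append_right a _) hp.2.2.2

lemma toReal_spec {x : EReal} (h0 : 0 ≤ x) (ht : x < ⊤) : x = ↑x.toReal := by
  refine (EReal.coe_toReal ht.ne ?_).symm
  intro hb
  rw [hb] at h0
  simp at h0

/-- Every shortest-path witness in `G'` (or `G`) to any target that uses the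
edge `(u,v)` is strictly longer than `d(s,t)`, when the affectedness condition fails. -/
lemma IsUpdate.infix_big (h : IsUpdate G G' u v) {s t : V}
    (hcond : ¬ (G.dist s u < ⊤ ∧ G.dist s u + (G'.w u v : EReal) ≤ G.dist s v))
    {p : List V} (hp : G'.IsPath s t p) (hinf : [u, v] <:+: p) :
    G.dist s t < (G'.pw p : EReal) := by
  obtain ⟨a, b, rfl⟩ := infix_decomp hinf
  have hq : G'.IsPath s u (a ++ [u]) := isPath_prefix hp
  have hqG : G.IsPath s u (a ++ [u]) := h.isPath_to_u.mp hq
  have hdu_le : G.dist s u ≤ ↑(G.pw (a ++ [u])) := dist_le hqG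
  have hdu_top : G.dist s u < ⊤ := dist_lt_top hqG
  push_neg at hcond
  have hdv : G.dist s v < G.dist s u + ↑(G'.w u v) := hcond hdu_top
  have hru : G.dist s u = ↑((G.dist s u).toReal) := toReal_spec (dist_nonneg s u) hdu_top
  set r := (G.dist s u).toReal with hr
  have hdv' : G.dist s v < ↑(r + G'.w u v) := by
    rw [EReal.coe_add, ← hru]; exact hdv
  have hdv_top : G.dist s v < ⊤ := lt_trans hdv' (by exact_mod_cast lt_top_iff_ne_top.mpr (EReal.coe_ne_top _))
  obtain ⟨q₀, hq₀, hwq₀⟩ := exists_SP s v hdv_top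
  obtain ⟨c, rfl⟩ : ∃ c, q₀ = c ++ [v] := by
    obtain ⟨ys, hys⟩ := List.getLast?_eq_some_iff.mp hq₀.2.2.1
    exact ⟨ys, hys⟩
  have hrw : a ++ u :: v :: b = (a ++ [u]) ++ v :: b := by simp
  have hsuf' : G'.IsPath v t (v :: b) := isPath_suffix (hrw ▸ hp)
  have hnu : u ∉ v :: b := by
    have : (u :: v :: b).Nodup :=
      List.Nodup.sublist (List.sublist_append_right a _) hp.2.2.2
    exact (List.nodup_cons.mp this).1
  have hniuv : ¬ [u, v] <:+: (v :: b) := fun hi => hnu (hi.sublist.subset (by simp))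
  have hsufG : G.IsPath v t (v :: b) :=
    ⟨h.chain_down hsuf'.1 hniuv, hsuf'.2.1, hsuf'.2.2.1, hsuf'.2.2.2⟩
  -- the spliced walk c ++ v :: b
  have hwc : List.Chain' G.E (c ++ v :: b) := by
    simp only [List.Chain', List.isChain_append]
    have hq₀c := hq₀.1
    simp only [List.Chain', List.isChain_append] at hq₀c
    refine ⟨hq₀c.1, hsufG.1, fun x hx y hy => ?_⟩
    have hyv : v = y := by simpa using hy
    subst hyv
    exact hq₀c.2.2 x hx v (by simp)
  have hwh : (c ++ v :: b).head? = some s := by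
    rw [head?_eq_of_append]; exact hq₀.2.1
  have hwt : (c ++ v :: b).getLast? = some t := by
    rw [getLast?_append_cons]
    have h1 := hp.2.2.1
    rwa [getLast?_append_cons, List.getLast?_cons_cons] at h1
  have hwalk : G.dist s t ≤ ↑(G.pw (c ++ v :: b)) :=
    dist_le_pw_walk (c ++ v :: b).length (le_refl _) hwc hwh hwt
  have hpwwalk : G.pw (c ++ v :: b) = G.pw (c ++ [v]) + G.pw (v :: b) :=
    pw_append_cons c v b
  -- weight of p in G'
  have hpwp : G'.pw (a ++ u :: v :: b) =
      G.pw (a ++ [u]) + G'.w u v + G.pw (v :: b) := by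
    rw [pw_append_cons a u (v :: b), pw_cons_cons,
      h.pw_eq (not_infix_of_getLast hqG.2.2.2 hqG.2.2.1), h.pw_eq hniuv]
    ring
  -- the real inequality
  have hr1 : r ≤ G.pw (a ++ [u]) := by
    rw [hru] at hdu_le; exact_mod_cast hdu_le
  have hr2 : G.pw (c ++ [v]) < r + G'.w u v := by
    rw [← hwq₀] at hdv'; exact_mod_cast hdv'
  calc G.dist s t ≤ ↑(G.pw (c ++ [v]) + G.pw (v :: b)) := by rw [← hpwwalk]; exact hwalk
    _ < ↑(G'.pw (a ++ u :: v :: b)) := by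
        rw [hpwp]
        apply EReal.coe_lt_coe_iff.mpr
        linarith

lemma IsUpdate.transfer (h : IsUpdate G G' u v) {s : V}
    (hcond : ¬ (G.dist s u < ⊤ ∧ G.dist s u + (G'.w u v : EReal) ≤ G.dist s v)) (t : V) :
    G'.dist s t = G.dist s t ∧ G'.SP s t = G.SP s t := by
  have hd : G'.dist s t = G.dist s t := by
    refine le_antisymm (h.dist'_le_dist s t) ?_
    apply le_sInf
    rintro x ⟨p, hp, rfl⟩
    show G.dist s t ≤ (↑(G'.pw p) : EReal)
    by_cases hinf : [u, v] <:+: p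
    · exact (h.infix_big hcond hp hinf).le
    · have hpG : G.IsPath s t p := ⟨h.chain_down hp.1 hinf, hp.2.1, hp.2.2.1, hp.2.2.2⟩
      rw [h.pw_eq hinf]
      exact dist_le hpG
  refine ⟨hd, ?_⟩
  ext p
  constructor
  · rintro ⟨hp, heq⟩
    by_cases hinf : [u, v] <:+: p
    · have hbig := h.infix_big hcond hp hinf
      rw [heq, hd] at hbig
      exact absurd hbig (lt_irrefl _)
    · have hpG : G.IsPath s t p := ⟨h.chain_down hp.1 hinf, hp.2.1, hp.2.2.1, hp.2.2.2⟩
      exact ⟨hpG, by rw [← h.pw_eq hinf, heq, hd]⟩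
  · rintro ⟨hp, heq⟩
    by_cases hinf : [u, v] <:+: p
    · have hbig := h.infix_big hcond (h.isPath_up hp) hinf
      have h2 : (G'.pw p : EReal) ≤ (G.pw p : EReal) := by exact_mod_cast h.pw'_le_pw hp.1
      rw [heq] at h2
      exact absurd (lt_of_lt_of_le hbig h2) (lt_irrefl _)
    · exact ⟨h.isPath_up hp, by rw [h.pw_eq hinf, heq, hd]⟩

lemma infix_path_to_v {H : WDigraph V} {s : V} {p : List V} (hp : H.IsPath s v p)
    (hinf : [u, v] <:+: p) : ∃ c, p = (c ++ [u]) ++ [v] := by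
  obtain ⟨a, b, rfl⟩ := infix_decomp hinf
  cases b with
  | nil => exact ⟨a, by simp⟩
  | cons y ys =>
    exfalso
    have h1 := hp.2.2.1
    rw [getLast?_append_cons, List.getLast?_cons_cons, List.getLast?_cons_cons] at h1
    have hv : v ∈ y :: ys := by
      obtain ⟨zs, hzs⟩ := List.getLast?_eq_some_iff.mp h1
      rw [hzs]; simp
    have hnd : (v :: y :: ys).Nodup := by
      refine List.Nodup.sublist ?_ hp.2.2.2
      refine List.Sublist.trans ?_ (List.sublist_append_right a _)
      exact List.sublist_cons_self u _
    exact (List.nodup_cons.mp hnd).1 hv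

lemma IsUpdate.pw_append_v (h : IsUpdate G G' u v) {q : List V}
    (hnd : q.Nodup) (hl : q.getLast? = some u) :
    G'.pw (q ++ [v]) = G.pw q + G'.w u v := by
  have hni := not_infix_of_getLast hnd hl (v := v)
  obtain ⟨c, rfl⟩ := List.getLast?_eq_some_iff.mp hl
  have hrw : (c ++ [u]) ++ [v] = c ++ u :: [v] := by simp
  rw [hrw, pw_append_cons c u [v]]
  have h2 : G'.pw (u :: [v]) = G'.w u v := by
    rw [pw_cons_cons]; simp [pw]
  rw [h2, h.pw_eq hni]

lemma IsUpdate.affected (h : IsUpdate G G' u v) {s : V}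
    (h1 : G.dist s u < ⊤) (h2 : G.dist s u + (G'.w u v : EReal) ≤ G.dist s v) :
    G.dist s v > G'.dist s v ∨ G.sigma s v ≠ G'.sigma s v := by
  have hw0 : 0 < G'.w u v := G'.pos u v h.edge'
  have hru : G.dist s u = ↑((G.dist s u).toReal) := toReal_spec (dist_nonneg s u) h1
  set r := (G.dist s u).toReal with hrdef
  have h2' : (↑(r + G'.w u v) : EReal) ≤ G.dist s v := by
    rw [EReal.coe_add, ← hru]; exact h2
  -- every shortest s-u path avoids v
  have hvq : ∀ q', q' ∈ G.SP s u → v ∉ q' := by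
    rintro q' ⟨hq', hwq'⟩ hv
    obtain ⟨c, e, rfl⟩ := List.append_of_mem hv
    have hpre : G.IsPath s v (c ++ [v]) := isPath_prefix hq'
    have hs : 0 ≤ G.pw (v :: e) := pw_nonneg (hq'.1.suffix ⟨c, rfl⟩)
    have hsplit : G.pw (c ++ v :: e) = G.pw (c ++ [v]) + G.pw (v :: e) := pw_append_cons c v e
    have hle : G.dist s v ≤ ↑(G.pw (c ++ [v])) := dist_le hpre
    have hq'r : G.pw (c ++ v :: e) = r := by
      have h3 := hwq'.trans hru
      exact_mod_cast h3
    have h4 : (↑(r + G'.w u v) : EReal) ≤ ↑(G.pw (c ++ [v])) := le_trans h2' hle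
    rw [EReal.coe_le_coe_iff] at h4
    linarith
  -- the extension construction
  have hext : ∀ q', q' ∈ G.SP s u →
      G'.IsPath s v (q' ++ [v]) ∧ G'.pw (q' ++ [v]) = r + G'.w u v := by
    rintro q' hq'mem
    obtain ⟨hq', hwq'⟩ := hq'mem
    have hvq' := hvq q' ⟨hq', hwq'⟩
    have hpwq' : G.pw q' = r := by
      have h3 := hwq'.trans hru
      exact_mod_cast h3
    refine ⟨⟨?_, ?_, ?_, ?_⟩, ?_⟩
    · simp only [List.Chain', List.isChain_append]
      refine ⟨h.chain_up hq'.1, List.isChain_singleton v, fun x hx y hy => ?_⟩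
      rw [hq'.2.2.1] at hx
      simp only [Option.mem_def, Option.some.injEq, List.head?_cons] at hx hy
      subst hx; subst hy
      exact h.edge'
    · rw [List.head?_append, hq'.2.1]; rfl
    · rw [getLast?_append_cons]; rfl
    · rw [List.nodup_append]
      refine ⟨hq'.2.2.2, List.nodup_singleton v, fun a ha b hb hab => ?_⟩
      have : b = v := by simpa using hb
      rw [hab, this] at ha
      exact hvq' ha
    · rw [h.pw_append_v hq'.2.2.2 hq'.2.2.1, hpwq']
  obtain ⟨q₁, hq₁⟩ := exists_SP s u h1
  rcases lt_or_eq_of_le h2 with hlt | heq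
  · -- strict decrease of distance
    left
    obtain ⟨hpath, hwval⟩ := hext q₁ hq₁
    calc G'.dist s v ≤ ↑(G'.pw (q₁ ++ [v])) := dist_le hpath
      _ = ↑(r + G'.w u v) := by rw [hwval]
      _ = G.dist s u + ↑(G'.w u v) := by rw [EReal.coe_add, ← hru]
      _ < G.dist s v := hlt
  · -- equality: sigma changes
    right
    have heqv : G.dist s v = ↑(r + G'.w u v) := by
      rw [← heq, EReal.coe_add, ← hru]
    -- d'(s,v) = d(s,v)
    have hd'v_le : G'.dist s v ≤ G.dist s v := h.dist'_le_dist s v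
    have hd'v_ge : G.dist s v ≤ G'.dist s v := by
      apply le_sInf
      rintro x ⟨p, hp, rfl⟩
      show G.dist s v ≤ (↑(G'.pw p) : EReal)
      by_cases hinf : [u, v] <:+: p
      · obtain ⟨c, rfl⟩ := infix_path_to_v hp hinf
        have hrw : (c ++ [u]) ++ [v] = c ++ u :: [v] := by simp
        have hp2 : G'.IsPath s v (c ++ u :: [v]) := by rw [← hrw]; exact hp
        have hq2 : G'.IsPath s u (c ++ [u]) := isPath_prefix hp2
        have hq2G := h.isPath_to_u.mp hq2
        have hge : r ≤ G.pw (c ++ [u]) := by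
          have h5 := dist_le hq2G
          rw [hru] at h5
          exact_mod_cast h5
        rw [heqv, h.pw_append_v hq2G.2.2.2 hq2G.2.2.1, EReal.coe_le_coe_iff]
        linarith
      · have hpG : G.IsPath s v p := ⟨h.chain_down hp.1 hinf, hp.2.1, hp.2.2.1, hp.2.2.2⟩
        rw [h.pw_eq hinf]
        exact dist_le hpG
    have hd'v : G'.dist s v = G.dist s v := le_antisymm hd'v_le hd'v_ge
    -- no shortest G-path to v uses (u,v)
    have hSPv_noinf : ∀ p₀ ∈ G.SP s v, ¬ [u, v] <:+: p₀ := by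
      rintro p₀ ⟨hp₀, hw₀⟩ hinf
      have hE : G.E u v := List.isChain_pair.mp (hp₀.1.infix hinf)
      rcases h.insert_or_decrease with hne | ⟨_, hdec⟩
      · exact hne hE
      obtain ⟨c, rfl⟩ := infix_path_to_v hp₀ hinf
      have hrw : (c ++ [u]) ++ [v] = c ++ u :: [v] := by simp
      have hp2 : G.IsPath s v (c ++ u :: [v]) := by rw [← hrw]; exact hp₀
      have hq2 : G.IsPath s u (c ++ [u]) := isPath_prefix hp2
      have hge : r ≤ G.pw (c ++ [u]) := by
        have h5 := dist_le hq2
        rw [hru] at h5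
        exact_mod_cast h5
      have hpw₀ : G.pw ((c ++ [u]) ++ [v]) = G.pw (c ++ [u]) + G.w u v := by
        rw [hrw, pw_append_cons c u [v], pw_cons_cons]
        simp [pw]
      have hval : G.pw ((c ++ [u]) ++ [v]) = r + G'.w u v := by
        have h6 := hw₀.trans heqv
        exact_mod_cast h6
      rw [hpw₀] at hval
      linarith
    -- SP' = SP ∪ (extension image)
    have hSP' : G'.SP s v = G.SP s v ∪ (fun q => q ++ [v]) '' G.SP s u := by
      ext p
      constructor
      · rintro ⟨hp, hwp⟩
        rw [hd'v, heqv] at hwp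
        by_cases hinf : [u, v] <:+: p
        · right
          obtain ⟨c, rfl⟩ := infix_path_to_v hp hinf
          have hrw : (c ++ [u]) ++ [v] = c ++ u :: [v] := by simp
          have hp2 : G'.IsPath s v (c ++ u :: [v]) := by rw [← hrw]; exact hp
          have hq2 : G'.IsPath s u (c ++ [u]) := isPath_prefix hp2
          have hq2G := h.isPath_to_u.mp hq2
          have hpw := h.pw_append_v hq2G.2.2.2 hq2G.2.2.1
          rw [hpw] at hwp
          have hcr : G.pw (c ++ [u]) = r := by
            have h7 : G.pw (c ++ [u]) + G'.w u v = r + G'.w u v := by exact_mod_cast hwp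
            linarith
          exact ⟨c ++ [u], ⟨hq2G, by rw [hcr, hru]⟩, rfl⟩
        · left
          have hpG : G.IsPath s v p := ⟨h.chain_down hp.1 hinf, hp.2.1, hp.2.2.1, hp.2.2.2⟩
          exact ⟨hpG, by rw [← h.pw_eq hinf, hwp, heqv]⟩
      · rintro (⟨hp₀, hw₀⟩ | ⟨q', hq'mem, rfl⟩)
        · have hni := hSPv_noinf _ ⟨hp₀, hw₀⟩
          exact ⟨h.isPath_up hp₀, by rw [h.pw_eq hni, hw₀, hd'v]⟩
        · obtain ⟨hpath, hwval⟩ := hext q' hq'mem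
          exact ⟨hpath, by rw [hwval, hd'v, heqv]⟩
    -- disjointness and cardinalities
    have hdisj : Disjoint (G.SP s v) ((fun q => q ++ [v]) '' G.SP s u) := by
      rw [Set.disjoint_left]
      rintro p hp ⟨q', hq'mem, rfl⟩
      obtain ⟨c, rfl⟩ := List.getLast?_eq_some_iff.mp hq'mem.1.2.2.1
      exact hSPv_noinf _ hp ⟨c, [], by simp⟩
    have hfin_u : (G.SP s u).Finite := (finite_isPath s u).subset (fun p hp => hp.1)
    have hfin_v : (G.SP s v).Finite := (finite_isPath s v).subset (fun p hp => hp.1)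
    have hfin_im : ((fun q => q ++ [v]) '' G.SP s u).Finite := hfin_u.image _
    have hcard : G'.sigma s v = G.sigma s v + G.sigma s u := by
      rw [sigma, sigma, sigma, hSP', Set.ncard_union_eq hdisj hfin_v hfin_im,
        Set.ncard_image_of_injective _ (List.append_left_injective [v])]
    have hpos : 0 < G.sigma s u := by
      rw [sigma]
      exact (Set.ncard_pos hfin_u).mpr ⟨q₁, hq₁⟩
    omega

/-- A node `s` has at least one affected target if and only if it
is an affected source of `v`:
`{s ∈ V : T(s) ≠ ∅} = S(v) = {s ∈ V : d(s,u) < ∞ ∧ d(s,u) + ω'(u,v) ≤ d(s,v)}`. -/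
theorem affected_sources_characterization (G G' : WDigraph V) (u v : V)
    (h : IsUpdate G G' u v) :
    {s : V | (affT G G' s).Nonempty} = affS G G' v ∧
      affS G G' v =
        {s : V | G.dist s u < ⊤ ∧ G.dist s u + (G'.w u v : EReal) ≤ G.dist s v} := by
  have key : ∀ s, ¬ (G.dist s u < ⊤ ∧ G.dist s u + (G'.w u v : EReal) ≤ G.dist s v) →
      ∀ t, t ∉ affT G G' s := by
    intro s hc t ht
    obtain ⟨hd, hSP⟩ := h.transfer hc t
    rcases ht with hlt | hne
    · rw [hd] at hlt; exact absurd hlt (lt_irrefl _)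
    · refine hne ?_
      simp only [sigma]
      rw [hSP]
  have hA : ∀ s, (G.dist s u < ⊤ ∧ G.dist s u + (G'.w u v : EReal) ≤ G.dist s v) →
      s ∈ affS G G' v := fun s hc => h.affected hc.1 hc.2
  have h2 : affS G G' v =
      {s : V | G.dist s u < ⊤ ∧ G.dist s u + (G'.w u v : EReal) ≤ G.dist s v} := by
    ext s
    constructor
    · intro hs
      by_contra hc
      exact key s hc v hs
    · exact hA s
  refine ⟨?_, h2⟩
  ext s
  constructor
  · rintro ⟨t, ht⟩
    by_contra hs
    rw [h2] at hs
    exact key s hs t ht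
  · intro hs
    exact ⟨v, hs⟩


end WDigraph
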